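/- Let R be a commutative Noetherian ring and let M be a finitely generated R-submodule of the total ring of fractions Q(R) containing the image of a non-zero-divisor of R (a regular fractional ideal). Then for every short exact sequence 0 → K → P → M → 0 of R-modules with P finitely generated projective, the trace ideal Tr_R(M) equals the annihilator ann_R Ext^1_R(M, K). -/

import Mathlib

open CategoryTheory Opposite Limits Projective

universe u

/-- The trace ideal of an `R`-module `M`: the ideal of `R` generated by the images of all
`R`-linear maps `M → R`. -/
noncomputable def traceIdeal (R : Type u) [CommRing R] (M : Type u)
    [AddCommGroup M] [Module R M] : Ideal R :=
  ⨆ f : M →ₗ[R] R, LinearMap.range f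

noncomputable section AuxiliaryLemmas

variable {R : Type u} [CommRing R]

/-- Key lemma: any linear functional on a fractional ideal acts as multiplication. -/
theorem key_comm (M : Submodule R (Localization (nonZeroDivisors R)))
    (e : R) (he : e ∈ nonZeroDivisors R) (heM : algebraMap R (Localization (nonZeroDivisors R)) e ∈ M)
    (f : M →ₗ[R] R) (x y : M) :
    algebraMap R (Localization (nonZeroDivisors R)) (f x) * (y : (Localization (nonZeroDivisors R))) = algebraMap R (Localization (nonZeroDivisors R)) (f y) * (x : (Localization (nonZeroDivisors R))) := by
  set eM : M := ⟨algebraMap R (Localization (nonZeroDivisors R)) e, heM⟩ with heMdef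
  -- clear denominators
  obtain ⟨⟨a, s⟩, hx⟩ := IsLocalization.surj (nonZeroDivisors R) (x : (Localization (nonZeroDivisors R)))
  obtain ⟨⟨b, t⟩, hy⟩ := IsLocalization.surj (nonZeroDivisors R) (y : (Localization (nonZeroDivisors R)))
  -- s • x ∈ M etc.
  set x' : M := (s : R) • x with hx'
  set y' : M := (t : R) • y with hy'
  have hx'v : (x' : (Localization (nonZeroDivisors R))) = algebraMap R (Localization (nonZeroDivisors R)) a := by
    simp [hx', Algebra.smul_def, mul_comm, hx]
  have hy'v : (y' : (Localization (nonZeroDivisors R))) = algebraMap R (Localization (nonZeroDivisors R)) b := by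
    simp [hy', Algebra.smul_def, mul_comm, hy]
  -- e * f x' = a * f eM
  have h1 : e * f x' = a * f eM := by
    have : e • x' = a • eM := by
      apply Subtype.ext
      simp [hx'v, Algebra.smul_def, heMdef, ← map_mul, mul_comm]
    have := congrArg f this
    simpa [mul_comm] using this
  have h2 : e * f y' = b * f eM := by
    have : e • y' = b • eM := by
      apply Subtype.ext
      simp [hy'v, Algebra.smul_def, heMdef, ← map_mul, mul_comm]
    have := congrArg f this
    simpa [mul_comm] using this
  -- it suffices to prove the equation multiplied by the unit (e*e*s*t)
  have hu : IsUnit (algebraMap R (Localization (nonZeroDivisors R)) (e * e * (s : R) * (t : R))) :=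
    IsLocalization.map_units (Localization (nonZeroDivisors R)) (⟨_, mul_mem (mul_mem (mul_mem he he) s.2) t.2⟩ :
      nonZeroDivisors R)
  apply hu.mul_left_cancel
  have hfx' : f x' = (s : R) * f x := by simp [hx', mul_comm]
  have hfy' : f y' = (t : R) * f y := by simp [hy', mul_comm]
  have hxq : algebraMap R (Localization (nonZeroDivisors R)) (s : R) * (x : (Localization (nonZeroDivisors R))) = algebraMap R (Localization (nonZeroDivisors R)) a := by
    rw [mul_comm]; exact hx
  have hyq : algebraMap R (Localization (nonZeroDivisors R)) (t : R) * (y : (Localization (nonZeroDivisors R))) = algebraMap R (Localization (nonZeroDivisors R)) b := by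
    rw [mul_comm]; exact hy
  calc algebraMap R (Localization (nonZeroDivisors R)) (e * e * (s : R) * (t : R)) * (algebraMap R (Localization (nonZeroDivisors R)) (f x) * (y : (Localization (nonZeroDivisors R))))
      = (algebraMap R (Localization (nonZeroDivisors R)) (e * ((s : R) * f x)) * (algebraMap R (Localization (nonZeroDivisors R)) e)) *
          (algebraMap R (Localization (nonZeroDivisors R)) (t : R) * (y : (Localization (nonZeroDivisors R)))) := by
        simp only [map_mul]; ring
    _ = (algebraMap R (Localization (nonZeroDivisors R)) (a * f eM)) * (algebraMap R (Localization (nonZeroDivisors R)) e) * algebraMap R (Localization (nonZeroDivisors R)) b := by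
        rw [← hfx', h1, hyq]
    _ = algebraMap R (Localization (nonZeroDivisors R)) (a * b * f eM * e) := by simp only [map_mul]; ring
    _ = (algebraMap R (Localization (nonZeroDivisors R)) (b * f eM)) * (algebraMap R (Localization (nonZeroDivisors R)) e) * algebraMap R (Localization (nonZeroDivisors R)) a := by
        simp only [map_mul]; ring
    _ = (algebraMap R (Localization (nonZeroDivisors R)) (e * ((t : R) * f y)) * (algebraMap R (Localization (nonZeroDivisors R)) e)) *
          (algebraMap R (Localization (nonZeroDivisors R)) (s : R) * (x : (Localization (nonZeroDivisors R)))) := by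
        rw [← hfy', h2, hxq]
    _ = algebraMap R (Localization (nonZeroDivisors R)) (e * e * (s : R) * (t : R)) * (algebraMap R (Localization (nonZeroDivisors R)) (f y) * (x : (Localization (nonZeroDivisors R)))) := by
        simp only [map_mul]; ring


def liftIdeal (K P : Type u) [AddCommGroup K] [Module R K] [AddCommGroup P] [Module R P]
    (ι : K →ₗ[R] P) : Ideal R where
  carrier := {r | ∃ g : P →ₗ[R] K, g ∘ₗ ι = r • (LinearMap.id : K →ₗ[R] K)}
  add_mem' := by
    rintro a b ⟨g₁, h₁⟩ ⟨g₂, h₂⟩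
    exact ⟨g₁ + g₂, by rw [LinearMap.add_comp, h₁, h₂, add_smul]⟩
  zero_mem' := ⟨0, by simp⟩
  smul_mem' := by
    rintro c x ⟨g, hg⟩
    exact ⟨c • g, by rw [LinearMap.smul_comp, hg, smul_assoc]⟩


theorem coe_smul_loc (M : Submodule R (Localization (nonZeroDivisors R))) (r : R) (x : M) :
    ((r • x : M) : (Localization (nonZeroDivisors R))) = algebraMap R (Localization (nonZeroDivisors R)) r * (x : (Localization (nonZeroDivisors R))) := by
  rw [Submodule.coe_smul, Algebra.smul_def]

variable (M : Submodule R (Localization (nonZeroDivisors R)))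
  (K P : Type u) [AddCommGroup K] [Module R K] [AddCommGroup P] [Module R P]
  (ι : K →ₗ[R] P) (π : P →ₗ[R] ↥M)

theorem trace_le_lift
    (hreg : ∃ r ∈ nonZeroDivisors R, algebraMap R (Localization (nonZeroDivisors R)) r ∈ M)
    (hι : Function.Injective ι) (hexact : Function.Exact ι π)
    (hπ : Function.Surjective π) :
    traceIdeal R ↥M ≤ liftIdeal K P ι := by
  obtain ⟨e, he, heM⟩ := hreg
  refine iSup_le fun f => ?_
  rintro r ⟨m, rfl⟩
  -- choose p0 with π p0 = m
  obtain ⟨p0, hp0⟩ := hπ m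
  -- h : P →ₗ P, p ↦ f (π p) • p0
  set h : P →ₗ[R] P :=
    { toFun := fun p => f (π p) • p0
      map_add' := fun p q => by simp [add_smul]
      map_smul' := fun c p => by simp [mul_smul] } with hdef
  set φ : P →ₗ[R] P := f m • LinearMap.id - h with hφdef
  have hφ : ∀ p, π (φ p) = 0 := by
    intro p
    have hkey := key_comm M e he heM f m (π p)
    have : (f m) • (π p) = f (π p) • m := by
      apply Subtype.ext
      rw [coe_smul_loc, hkey, coe_smul_loc]
    simp [hφdef, hdef, hp0, this]
  -- factor φ through K
  have hφmem : ∀ p, φ p ∈ LinearMap.range ι := by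
    intro p
    rw [← LinearMap.exact_iff.1 hexact]
    exact hφ p
  set eK : K ≃ₗ[R] LinearMap.range ι := LinearEquiv.ofInjective ι hι with heK
  set g : P →ₗ[R] K := eK.symm.toLinearMap ∘ₗ (φ.codRestrict (LinearMap.range ι) hφmem)
    with hg
  have hinv : ∀ z : LinearMap.range ι, ι (eK.symm z) = (z : P) := by
    intro z
    conv_rhs => rw [← eK.apply_symm_apply z]
    rfl
  have hιg : ∀ p, ι (g p) = φ p := by
    intro p
    show ι (eK.symm ⟨φ p, hφmem p⟩) = φ p
    exact hinv ⟨φ p, hφmem p⟩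
  refine ⟨g, ?_⟩
  ext k
  apply hι
  have hπι : π (ι k) = 0 := hexact.apply_apply_eq_zero k
  simp [hιg, hφdef, hdef, hπι]

theorem lift_le_trace [Module.Finite R P] [Module.Projective R P]
    (hreg : ∃ r ∈ nonZeroDivisors R, algebraMap R (Localization (nonZeroDivisors R)) r ∈ M)
    (hι : Function.Injective ι) (hexact : Function.Exact ι π)
    (hπ : Function.Surjective π) :
    liftIdeal K P ι ≤ traceIdeal R ↥M := by
  obtain ⟨e, he, heM⟩ := hreg
  rintro r ⟨g, hg⟩
  set φ : P →ₗ[R] P := r • LinearMap.id - ι ∘ₗ g with hφdef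
  have hker : LinearMap.ker π ≤ LinearMap.ker φ := by
    intro p hp
    rw [LinearMap.exact_iff.1 hexact] at hp
    obtain ⟨k, rfl⟩ := hp
    have : g (ι k) = r • k := by
      have := congrArg (fun (h : K →ₗ[R] K) => h k) hg
      simpa using this
    simp [hφdef, LinearMap.mem_ker, this]
  set eQ : (P ⧸ LinearMap.ker π) ≃ₗ[R] M := π.quotKerEquivOfSurjective hπ with heQ
  set ψ : ↥M →ₗ[R] P := (LinearMap.ker π).liftQ φ hker ∘ₗ eQ.symm.toLinearMap with hψ
  have hψπ : ∀ p, ψ (π p) = φ p := by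
    intro p
    have h1 : eQ.symm (π p) = Submodule.Quotient.mk p := by
      rw [LinearEquiv.symm_apply_eq]
      rfl
    simp [hψ, h1]
  have hπψ : ∀ m : M, π (ψ m) = r • m := by
    intro m
    obtain ⟨p, rfl⟩ := hπ m
    rw [hψπ]
    have hπι : ∀ k, π (ι k) = 0 := fun k => hexact.apply_apply_eq_zero k
    simp [hφdef, hπι]
  -- finite free cover with section
  obtain ⟨n, pr, hpr⟩ := Module.Finite.exists_fin' R P
  obtain ⟨σ, hσ⟩ := Module.projective_lifting_property pr LinearMap.id hpr
  set c : Fin n → (↥M →ₗ[R] R) := fun j => LinearMap.proj j ∘ₗ σ ∘ₗ ψ with hc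
  set μ : Fin n → ↥M := fun j => π (pr (Pi.single j 1)) with hμ
  have hrm : ∀ m : M, r • m = ∑ j, (c j m) • μ j := by
    intro m
    rw [← hπψ]
    have h1 : σ (ψ m) = ∑ j, (σ (ψ m) j) • (Pi.single j (1 : R) : Fin n → R) := by
      conv_lhs => rw [← Finset.univ_sum_single (σ (ψ m))]
      refine Finset.sum_congr rfl fun j _ => ?_
      rw [← Pi.single_smul, smul_eq_mul, mul_one]
    have h2 : ψ m = pr (σ (ψ m)) := by
      have := congrArg (fun (h : P →ₗ[R] P) => h (ψ m)) hσ
      simpa using this.symm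
    rw [h2, h1, map_sum, map_sum]
    refine Finset.sum_congr rfl fun j _ => ?_
    rw [map_smul, map_smul]
    rfl
  -- evaluate at eM and cancel
  set eM : M := ⟨algebraMap R (Localization (nonZeroDivisors R)) e, heM⟩ with heMdef
  have hQ : algebraMap R (Localization (nonZeroDivisors R)) r * (eM : (Localization (nonZeroDivisors R))) = algebraMap R (Localization (nonZeroDivisors R)) (∑ j, c j (μ j)) * (eM : (Localization (nonZeroDivisors R))) := by
    have h0 : ((r • eM : M) : (Localization (nonZeroDivisors R))) =
        ((∑ j, (c j eM) • μ j : M) : (Localization (nonZeroDivisors R))) :=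
      congrArg (fun m : M => (m : (Localization (nonZeroDivisors R)))) (hrm eM)
    have h1 := coe_smul_loc M r eM
    have h2 : ((∑ j, (c j eM) • μ j : M) : (Localization (nonZeroDivisors R))) = ∑ j, algebraMap R (Localization (nonZeroDivisors R)) (c j eM) * (μ j : (Localization (nonZeroDivisors R))) := by
      push_cast
      refine Finset.sum_congr rfl fun j _ => ?_
      exact coe_smul_loc M _ _
    rw [h1, h2] at h0
    rw [h0, map_sum, Finset.sum_mul]
    refine Finset.sum_congr rfl fun j _ => ?_
    exact key_comm M e he heM (c j) eM (μ j)
  have hunit : IsUnit (algebraMap R (Localization (nonZeroDivisors R)) ((⟨e, he⟩ : nonZeroDivisors R) : R)) :=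
    IsLocalization.map_units (Localization (nonZeroDivisors R)) (⟨e, he⟩ : nonZeroDivisors R)
  have heq : algebraMap R (Localization (nonZeroDivisors R)) r = algebraMap R (Localization (nonZeroDivisors R)) (∑ j, c j (μ j)) := by
    have : (eM : (Localization (nonZeroDivisors R))) = algebraMap R (Localization (nonZeroDivisors R)) e := rfl
    rw [this] at hQ
    exact hunit.mul_right_cancel hQ
  have hrval : r = ∑ j, c j (μ j) :=
    IsLocalization.injective (Localization (nonZeroDivisors R)) (le_refl (nonZeroDivisors R)) heq
  rw [hrval]
  exact Ideal.sum_mem _ fun j _ =>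
    (le_iSup (fun f : ↥M →ₗ[R] R => LinearMap.range f) (c j)) ⟨μ j, rfl⟩


end AuxiliaryLemmas

noncomputable section ExtSide

variable {R : Type u} [CommRing R]

variable {Z P' : ModuleCat.{u} R} (p : P' ⟶ Z) [Projective P'] [Epi p]

def myOfComplex : ChainComplex (ModuleCat.{u} R) ℕ :=
  ChainComplex.mk' P' (Projective.syzygies p) (Projective.d p)
    (fun f => ⟨_, Projective.d f, by exact @id (Projective.d f ≫ f = 0) ((Category.assoc (π (kernel f)) (kernel.ι f) f).trans (by rw [kernel.condition, comp_zero]; rfl))⟩)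

lemma myOfComplex_d_1_0 : (myOfComplex p).d 1 0 = d p := by
  simp [myOfComplex]

lemma myOfComplex_exactAt_succ (n : ℕ) :
    (myOfComplex p).ExactAt (n + 1) := by
  rw [HomologicalComplex.exactAt_iff' _ (n + 1 + 1) (n + 1) n (by simp) (by simp)]
  dsimp [myOfComplex, HomologicalComplex.sc', HomologicalComplex.shortComplexFunctor',
      ChainComplex.mk', ChainComplex.mk]
  match n with
  | 0 => apply exact_d_f
  | n + 1 =>
    simp only [ChainComplex.of.d, dif_pos, eqToHom_refl]
    apply exact_d_f

instance (n : ℕ) : Projective ((myOfComplex p).X n) := by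
  obtain (_ | _ | _ | n) := n
  · exact inferInstanceAs (Projective P')
  all_goals apply Projective.projective_over

def myRes : ProjectiveResolution Z where
  complex := myOfComplex p
  π := (ChainComplex.toSingle₀Equiv _ _).symm ⟨p, by
          rw [myOfComplex_d_1_0]; exact (Category.assoc (π (kernel p)) (kernel.ι p) p).trans (by rw [kernel.condition, comp_zero]; rfl)⟩
  quasiIso := ⟨fun n => by
    cases n
    · rw [ChainComplex.quasiIsoAt₀_iff, ShortComplex.quasiIso_iff_of_zeros']
      · refine (ShortComplex.exact_and_epi_g_iff_of_iso ?_).2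
          ⟨exact_d_f p, inferInstance⟩
        exact ShortComplex.isoMk (Iso.refl _) (Iso.refl _) (Iso.refl _)
          (by simp [myOfComplex]; rfl) (by simp; rfl)
      all_goals rfl
    · rw [quasiIsoAt_iff_exactAt']
      · apply myOfComplex_exactAt_succ
      · apply ChainComplex.exactAt_succ_single_obj⟩

theorem annihilator_congr {A B : Type u} [AddCommGroup A] [Module R A]
    [AddCommGroup B] [Module R B] (e : A ≃ₗ[R] B) :
    Module.annihilator R A = Module.annihilator R B := by
  ext r
  simp only [Module.mem_annihilator]
  constructor
  · intro h b
    calc r • b = r • e (e.symm b) := by rw [e.apply_symm_apply]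
    _ = e (r • e.symm b) := (map_smul e r _).symm
    _ = e 0 := by rw [h]
    _ = 0 := map_zero e
  · intro h a
    apply e.injective
    rw [map_smul, h]; exact (map_zero e).symm


theorem ann_ext_eq_lift (N : Type u) [AddCommGroup N] [Module R N]
    (K P : Type u) [AddCommGroup K] [Module R K] [AddCommGroup P] [Module R P]
    [Module.Projective R P]
    (ι : K →ₗ[R] P) (π : P →ₗ[R] N)
    (hι : Function.Injective ι) (hexact : Function.Exact ι π)
    (hπ : Function.Surjective π) :
    Module.annihilator R
        (((Ext R (ModuleCat.{u} R) 1).obj (op (ModuleCat.of R N))).obj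
          (ModuleCat.of R K)) = liftIdeal K P ι := by
  letI : Projective (ModuleCat.of R P) := (IsProjective.iff_projective P).1 inferInstance
  let p : ModuleCat.of R P ⟶ ModuleCat.of R N := ModuleCat.ofHom π
  haveI : Epi p := (ModuleCat.epi_iff_surjective p).2 hπ
  let Y : ModuleCat.{u} R := ModuleCat.of R K
  have e0 : (((Ext R (ModuleCat.{u} R) 1).obj (op (ModuleCat.of R N))).obj Y) ≅
      (((myOfComplex p).linearYonedaObj R Y).sc' 0 1 2).moduleCatLeftHomologyData.H :=
    (myRes p).isoExt 1 Y ≪≫ ((myOfComplex p).linearYonedaObj R Y).homologyIsoSc' 0 1 2 (by simp) (by simp) ≪≫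
      ShortComplex.moduleCatHomologyIso _
  rw [annihilator_congr e0.toLinearEquiv]
  -- range of d_1_0 is the image of ι
  have hrange10 : LinearMap.range (((myOfComplex p).d 1 0).hom : ↑((myOfComplex p).X 1) →ₗ[R] P) = LinearMap.range ι := by
    have h1 : LinearMap.range ((Projective.d p).hom : ↑((myOfComplex p).X 1) →ₗ[R] P) =
        LinearMap.ker (p.hom : P →ₗ[R] N) :=
      (ShortComplex.moduleCat_exact_iff_range_eq_ker _).1 (exact_d_f p)
    have h2 : (((myOfComplex p).d 1 0).hom : ↑((myOfComplex p).X 1) →ₗ[R] P) = ((Projective.d p).hom : ↑((myOfComplex p).X 1) →ₗ[R] P) :=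
      congrArg (fun (q : (myOfComplex p).X 1 ⟶ (myOfComplex p).X 0) => (q.hom : ↑((myOfComplex p).X 1) →ₗ[R] P))
        (myOfComplex_d_1_0 p)
    rw [h2]
    exact h1.trans (by rw [← LinearMap.exact_iff.1 hexact]; rfl)
  have hrange21 : LinearMap.range (((myOfComplex p).d 2 1).hom : ↑((myOfComplex p).X 2) →ₗ[R] ↑((myOfComplex p).X 1)) =
      LinearMap.ker (((myOfComplex p).d 1 0).hom : ↑((myOfComplex p).X 1) →ₗ[R] P) := by
    have h1 : (myOfComplex p).ExactAt 1 := myOfComplex_exactAt_succ p 0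
    rw [HomologicalComplex.exactAt_iff' _ 2 1 0 (by simp) (by simp)] at h1
    exact (ShortComplex.moduleCat_exact_iff_range_eq_ker _).1 h1
  have hmem : ∀ x : ↑((myOfComplex p).X 1), (((myOfComplex p).d 1 0).hom : ↑((myOfComplex p).X 1) →ₗ[R] P) x ∈ LinearMap.range ι := by
    intro x
    rw [← hrange10]
    exact ⟨x, rfl⟩
  let eK : K ≃ₗ[R] LinearMap.range ι := LinearEquiv.ofInjective ι hι
  have hinv : ∀ z : LinearMap.range ι, ι (eK.symm z) = (z : P) := by
    intro z
    conv_rhs => rw [← eK.apply_symm_apply z]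
    rfl
  let δ : ↑((myOfComplex p).X 1) →ₗ[R] K := eK.symm.toLinearMap ∘ₗ
    LinearMap.codRestrict (LinearMap.range ι) (((myOfComplex p).d 1 0).hom : ↑((myOfComplex p).X 1) →ₗ[R] P) hmem
  have hιδ : ∀ x : ↑((myOfComplex p).X 1), ι (δ x) = (((myOfComplex p).d 1 0).hom : ↑((myOfComplex p).X 1) →ₗ[R] P) x := by
    intro x
    exact hinv ⟨_, hmem x⟩
  have hδsurj : Function.Surjective δ := by
    intro k
    obtain ⟨x, hx⟩ : ι k ∈ LinearMap.range (((myOfComplex p).d 1 0).hom : ↑((myOfComplex p).X 1) →ₗ[R] P) := by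
      rw [hrange10]; exact ⟨k, rfl⟩
    exact ⟨x, hι (by rw [hιδ, hx])⟩
  have hkerδ : ∀ x : ↑((myOfComplex p).X 1), δ x = 0 ↔ (((myOfComplex p).d 1 0).hom : ↑((myOfComplex p).X 1) →ₗ[R] P) x = 0 := by
    intro x
    rw [← hιδ]
    exact ⟨fun h => by rw [h, map_zero]; rfl, fun h => hι (by rw [h, map_zero]; rfl)⟩
  -- hom-typed copy of δ
  let δh : (myOfComplex p).X 1 ⟶ Y := ModuleCat.ofHom δ
  -- membership computation
  ext r
  rw [Module.mem_annihilator]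
  constructor
  · intro h
    have hδcyc : (δh : ↑((((myOfComplex p).linearYonedaObj R Y).sc' 0 1 2).X₂)) ∈ LinearMap.ker (((myOfComplex p).linearYonedaObj R Y).sc' 0 1 2).g.hom := by
      refine (LinearMap.mem_ker (f := (((myOfComplex p).linearYonedaObj R Y).sc' 0 1 2).g.hom)).2 ?_
      have hg1 : (((myOfComplex p).linearYonedaObj R Y).sc' 0 1 2).g (δh : ↑((((myOfComplex p).linearYonedaObj R Y).sc' 0 1 2).X₂)) =
          ((myOfComplex p).d 2 1 ≫ δh : (myOfComplex p).X 2 ⟶ Y) := rfl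
      refine hg1.trans ?_
      show ((myOfComplex p).d 2 1 ≫ δh : (myOfComplex p).X 2 ⟶ Y) = 0
      ext x
      have hd : (((myOfComplex p).d 1 0).hom : ↑((myOfComplex p).X 1) →ₗ[R] P) ((((myOfComplex p).d 2 1).hom : _ →ₗ[R] _) x) = 0 := by
        have hcomp := (myOfComplex p).d_comp_d 2 1 0
        calc (((myOfComplex p).d 1 0).hom : ↑((myOfComplex p).X 1) →ₗ[R] P) ((((myOfComplex p).d 2 1).hom : _ →ₗ[R] _) x)
            = ((myOfComplex p).d 2 1 ≫ (myOfComplex p).d 1 0) x := rfl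
        _ = (0 : (myOfComplex p).X 2 ⟶ (myOfComplex p).X 0) x := by rw [hcomp]
        _ = 0 := rfl
      calc ((myOfComplex p).d 2 1 ≫ δh) x = δ ((((myOfComplex p).d 2 1).hom : _ →ₗ[R] _) x) := rfl
      _ = 0 := (hkerδ _).2 hd
      _ = (0 : (myOfComplex p).X 2 ⟶ Y) x := rfl
    have h1 := h (Submodule.Quotient.mk ⟨(δh : ↑((((myOfComplex p).linearYonedaObj R Y).sc' 0 1 2).X₂)), hδcyc⟩)
    replace h1 := (Submodule.Quotient.mk_eq_zero _).1 ((Submodule.Quotient.mk_smul _ r _).trans h1)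
    obtain ⟨v, hv⟩ := h1
    -- hom-typed copy of v
    let vh : (myOfComplex p).X 0 ⟶ Y := (v : ↑((((myOfComplex p).linearYonedaObj R Y).sc' 0 1 2).X₁))
    have hv0 : (((myOfComplex p).linearYonedaObj R Y).sc' 0 1 2).moduleCatToCycles v = r • (⟨(δh : ↑((((myOfComplex p).linearYonedaObj R Y).sc' 0 1 2).X₂)), hδcyc⟩ :
        LinearMap.ker (((myOfComplex p).linearYonedaObj R Y).sc' 0 1 2).g.hom) := hv
    have hv1 : ((myOfComplex p).d 1 0 ≫ vh : (myOfComplex p).X 1 ⟶ Y) = (r • δh : (myOfComplex p).X 1 ⟶ Y) :=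
      congrArg Subtype.val hv0
    refine ⟨(vh.hom : P →ₗ[R] K), ?_⟩
    ext k
    obtain ⟨x, hx⟩ : ι k ∈ LinearMap.range (((myOfComplex p).d 1 0).hom : ↑((myOfComplex p).X 1) →ₗ[R] P) := by
      rw [hrange10]; exact ⟨k, rfl⟩
    have hδx : δ x = k := hι (by rw [hιδ, hx])
    have hvp := congrArg (fun (q : (myOfComplex p).X 1 ⟶ Y) => q x) hv1
    simp only at hvp
    have hl : ((myOfComplex p).d 1 0 ≫ vh) x = (vh.hom : P →ₗ[R] K) ((((myOfComplex p).d 1 0).hom : _ →ₗ[R] P) x) := rfl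
    have hr' : (r • δh : (myOfComplex p).X 1 ⟶ Y) x = r • δ x := rfl
    rw [hl, hr', hx, hδx] at hvp
    exact hvp
  · rintro ⟨g, hg⟩ m
    obtain ⟨⟨u, hu⟩, rfl⟩ := Submodule.Quotient.mk_surjective _ m
    refine (Submodule.Quotient.mk_smul _ r _).symm.trans ((Submodule.Quotient.mk_eq_zero _).2 ?_)
    let uh : (myOfComplex p).X 1 ⟶ Y := (u : ↑((((myOfComplex p).linearYonedaObj R Y).sc' 0 1 2).X₂))
    have hucyc : ((myOfComplex p).d 2 1 ≫ uh : (myOfComplex p).X 2 ⟶ Y) = 0 := by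
      have hg1 : (((myOfComplex p).linearYonedaObj R Y).sc' 0 1 2).g u = ((myOfComplex p).d 2 1 ≫ uh : (myOfComplex p).X 2 ⟶ Y) := rfl
      rw [← hg1]
      exact hu
    -- factor u through δ
    have hkerle : LinearMap.ker δ ≤ LinearMap.ker (uh.hom : ↑((myOfComplex p).X 1) →ₗ[R] K) := by
      intro x hx
      rw [LinearMap.mem_ker] at hx ⊢
      have hx' : x ∈ LinearMap.range (((myOfComplex p).d 2 1).hom : ↑((myOfComplex p).X 2) →ₗ[R] ↑((myOfComplex p).X 1)) := by
        rw [hrange21, LinearMap.mem_ker, ← (hkerδ x)]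
        exact hx
      obtain ⟨y, rfl⟩ := hx'
      calc (uh.hom : ↑((myOfComplex p).X 1) →ₗ[R] K) ((((myOfComplex p).d 2 1).hom : _ →ₗ[R] _) y)
          = ((myOfComplex p).d 2 1 ≫ uh) y := rfl
      _ = (0 : (myOfComplex p).X 2 ⟶ Y) y := by rw [hucyc]
      _ = 0 := rfl
    let eδ : (↑((myOfComplex p).X 1) ⧸ LinearMap.ker δ) ≃ₗ[R] K := δ.quotKerEquivOfSurjective hδsurj
    let ut : K →ₗ[R] K :=
      (LinearMap.ker δ).liftQ (uh.hom : ↑((myOfComplex p).X 1) →ₗ[R] K) hkerle ∘ₗ eδ.symm.toLinearMap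
    have hutδ : ∀ x : ↑((myOfComplex p).X 1), ut (δ x) = (uh.hom : ↑((myOfComplex p).X 1) →ₗ[R] K) x := by
      intro x
      have h1 : eδ.symm (δ x) = Submodule.Quotient.mk x := by
        rw [LinearEquiv.symm_apply_eq]
        rfl
      show (LinearMap.ker δ).liftQ (uh.hom : ↑((myOfComplex p).X 1) →ₗ[R] K) hkerle (eδ.symm (δ x)) =
        (uh.hom : ↑((myOfComplex p).X 1) →ₗ[R] K) x
      rw [h1]
      rfl
    let vK : P →ₗ[R] K := ut ∘ₗ g
    refine ⟨((ModuleCat.ofHom vK : (myOfComplex p).X 0 ⟶ Y) : ↑((((myOfComplex p).linearYonedaObj R Y).sc' 0 1 2).X₁)), ?_⟩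
    apply Subtype.ext
    have hfv : ((((((myOfComplex p).linearYonedaObj R Y).sc' 0 1 2)).moduleCatToCycles ((ModuleCat.ofHom vK : (myOfComplex p).X 0 ⟶ Y) : ↑((((myOfComplex p).linearYonedaObj R Y).sc' 0 1 2).X₁)) :
        LinearMap.ker ((((myOfComplex p).linearYonedaObj R Y).sc' 0 1 2)).g.hom) : ↑((((myOfComplex p).linearYonedaObj R Y).sc' 0 1 2).X₂)) =
        ((myOfComplex p).d 1 0 ≫ (ModuleCat.ofHom vK : (myOfComplex p).X 0 ⟶ Y) : (myOfComplex p).X 1 ⟶ Y) := rfl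
    have hgoal : ((myOfComplex p).d 1 0 ≫ (ModuleCat.ofHom vK : (myOfComplex p).X 0 ⟶ Y) : (myOfComplex p).X 1 ⟶ Y) =
        (r • uh : (myOfComplex p).X 1 ⟶ Y) := by
      ext x
      have hgid : g (ι (δ x)) = r • δ x := by
        have := congrArg (fun (h : K →ₗ[R] K) => h (δ x)) hg
        simpa using this
      calc ((myOfComplex p).d 1 0 ≫ (ModuleCat.ofHom vK : (myOfComplex p).X 0 ⟶ Y)) x
          = vK ((((myOfComplex p).d 1 0).hom : _ →ₗ[R] P) x) := rfl
      _ = ut (g (ι (δ x))) := by rw [hιδ]; rfl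
      _ = ut (r • δ x) := by rw [hgid]
      _ = r • ut (δ x) := map_smul _ _ _
      _ = r • (uh.hom : ↑((myOfComplex p).X 1) →ₗ[R] K) x := by rw [hutδ]
      _ = (r • uh : (myOfComplex p).X 1 ⟶ Y) x := rfl
    exact hfv.trans hgoal



end ExtSide

/-- Let `R` be a commutative Noetherian ring and `M` a finitely generated `R`-submodule of the
total ring of fractions `Q(R)` containing the image of a non-zero-divisor of `R`.  Then for every
short exact sequence `0 → K → P → M → 0` with `P` finitely generated projective, the trace ideal
of `M` equals the annihilator of `Ext¹_R(M, K)`. -/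
theorem trace_eq_ann_ext_one_syzygy (R : Type u) [CommRing R] [IsNoetherianRing R]
    (M : Submodule R (Localization (nonZeroDivisors R)))
    (hfg : M.FG)
    (hreg : ∃ r ∈ nonZeroDivisors R,
      algebraMap R (Localization (nonZeroDivisors R)) r ∈ M)
    (K P : Type u) [AddCommGroup K] [Module R K] [AddCommGroup P] [Module R P]
    [Module.Finite R P] [Module.Projective R P]
    (ι : K →ₗ[R] P) (π : P →ₗ[R] ↥M)
    (hι : Function.Injective ι) (hexact : Function.Exact ι π)
    (hπ : Function.Surjective π) :
    traceIdeal R ↥M =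
      Module.annihilator R
        (((Ext R (ModuleCat.{u} R) 1).obj (op (ModuleCat.of R ↥M))).obj
          (ModuleCat.of R K)) := by
  rw [ann_ext_eq_lift (↥M) K P ι π hι hexact hπ]
  exact le_antisymm (trace_le_lift M K P ι π hreg hι hexact hπ)
    (lift_le_trace M K P ι π hreg hι hexact hπ)
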